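/- Let G be a cactus on n vertices containing an edge e lying on an odd cycle. Then PI(e) ≤ n - 3. -/

import Mathlib

open SimpleGraph Finset
open scoped Classical

variable {V : Type*}

/-- Number of vertices strictly closer to `x` than to `y` (excluding `x` and `y`). -/
noncomputable def nclose (G : SimpleGraph V) (x y : V) : ℕ :=
  Nat.card {w : V | w ≠ x ∧ w ≠ y ∧ G.dist w x < G.dist w y}

/-- The contribution `PI(e) = n_{xy}(x) + n_{xy}(y)` of an edge. -/
noncomputable def PIedge (G : SimpleGraph V) : Sym2 V → ℕ :=
  Sym2.lift ⟨fun x y => nclose G x y + nclose G y x, fun _ _ => add_comm _ _⟩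

/-- The vertex PI index of a graph. -/
noncomputable def PI [Fintype V] (G : SimpleGraph V) : ℕ :=
  ∑ e ∈ G.edgeFinset, PIedge G e

/-- A cactus: connected, and any two cycles share at most one vertex. -/
def IsCactus (G : SimpleGraph V) : Prop :=
  G.Connected ∧ ∀ (u v : V) (c₁ : G.Walk u u) (c₂ : G.Walk v v),
    c₁.IsCycle → c₂.IsCycle → {e | e ∈ c₁.edges} ≠ {e | e ∈ c₂.edges} →
    Set.ncard {x | x ∈ c₁.support ∧ x ∈ c₂.support} ≤ 1


variable {G : SimpleGraph V}

namespace SimpleGraph.Walk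

lemma getVert_mem_support' {u v : V} (p : G.Walk u v) (i : ℕ) :
    p.getVert i ∈ p.support := by
  rcases le_or_gt i p.length with h | h
  · exact mem_support_iff_exists_getVert.mpr ⟨i, rfl, h⟩
  · rw [getVert_of_length_le p h.le]; exact end_mem_support p

lemma getVert_tail_eq {u v : V} (p : G.Walk u v) {i : ℕ} (hi : i + 1 ≤ p.length) :
    p.getVert (i+1) = p.support.tail[i]'(by rw [List.length_tail, length_support]; omega) := by
  rw [getVert_eq_support_getElem p hi, ← List.getElem_tail]

lemma IsPath.getVert_inj {u v : V} {p : G.Walk u v} (hp : p.IsPath) {i j : ℕ}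
    (hi : i ≤ p.length) (hj : j ≤ p.length) (h : p.getVert i = p.getVert j) : i = j := by
  rw [getVert_eq_support_getElem p hi, getVert_eq_support_getElem p hj] at h
  exact ((p.isPath_def.mp hp).getElem_inj_iff).mp h

lemma IsCycle.getVert_inj {v : V} {c : G.Walk v v} (hc : c.IsCycle) {i j : ℕ}
    (hi : i < c.length) (hj : j < c.length) (h : c.getVert i = c.getVert j) : i = j := by
  have hnd : c.support.tail.Nodup := hc.2
  have hL : 3 ≤ c.length := hc.three_le_length
  obtain ⟨L', hL'⟩ : ∃ n, c.length = n + 1 := ⟨c.length - 1, by omega⟩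
  have hvlast : c.getVert c.length = c.support.tail[c.length - 1]'
      (by rw [List.length_tail, length_support]; omega) := by
    conv_lhs => rw [hL']
    rw [getVert_tail_eq c (by omega)]
    congr 1; omega
  rcases Nat.eq_zero_or_pos i with hi0 | hip
  · rcases Nat.eq_zero_or_pos j with hj0 | hjp
    · omega
    · exfalso
      obtain ⟨j', rfl⟩ : ∃ j', j = j' + 1 := ⟨j - 1, by omega⟩
      rw [hi0, getVert_zero] at h
      have h' := (getVert_length c).trans h
      rw [hvlast, getVert_tail_eq c hj.le] at h'
      have := (hnd.getElem_inj_iff).mp h'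
      omega
  · rcases Nat.eq_zero_or_pos j with hj0 | hjp
    · exfalso
      obtain ⟨i', rfl⟩ : ∃ i', i = i' + 1 := ⟨i - 1, by omega⟩
      rw [hj0, getVert_zero] at h
      have h' := (getVert_length c).trans h.symm
      rw [hvlast, getVert_tail_eq c hi.le] at h'
      have := (hnd.getElem_inj_iff).mp h'
      omega
    · obtain ⟨i', rfl⟩ : ∃ i', i = i' + 1 := ⟨i - 1, by omega⟩
      obtain ⟨j', rfl⟩ : ∃ j', j = j' + 1 := ⟨j - 1, by omega⟩
      rw [getVert_tail_eq c hi.le, getVert_tail_eq c hj.le] at h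
      have := (hnd.getElem_inj_iff).mp h
      omega

lemma edge_getVert {u v : V} (p : G.Walk u v) {f : Sym2 V} (hf : f ∈ p.edges) :
    ∃ i < p.length, f = s(p.getVert i, p.getVert (i+1)) := by
  induction p with
  | nil => simp at hf
  | cons h q ih =>
    rw [edges_cons, List.mem_cons] at hf
    rcases hf with rfl | hf
    · exact ⟨0, by simp, by rw [getVert_zero, getVert_cons_succ, getVert_zero]⟩
    · obtain ⟨i, hi, hie⟩ := ih hf
      exact ⟨i + 1, by simpa using hi, by rwa [getVert_cons_succ, getVert_cons_succ]⟩

lemma firstEdge_mem {u v : V} (p : G.Walk u v) (hp : ¬ p.Nil) :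
    s(u, p.getVert 1) ∈ p.edges := by
  have h1 : s(u, p.getVert 1) ∈ (cons (p.adj_snd hp) p.tail).edges := by
    rw [edges_cons]; exact List.mem_cons_self
  rwa [cons_tail_eq p hp] at h1

end SimpleGraph.Walk
namespace SimpleGraph

/-- The vertex of the cycle `c` at cyclic position `t`. -/
noncomputable def cvtx {v : V} (c : G.Walk v v) (t : ZMod c.length) : V :=
  c.getVert t.val

/-- The cyclic position of a vertex on the cycle `c` (junk value off the cycle). -/
noncomputable def cidx {v : V} (c : G.Walk v v) (u : V) : ZMod c.length :=
  if h : ∃ t : ZMod c.length, cvtx c t = u then h.choose else 0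

variable {v : V} {c : G.Walk v v}

lemma cvtx_injective (hc : c.IsCycle) [NeZero c.length] :
    Function.Injective (cvtx c) := by
  intro s t h
  exact ZMod.val_injective _ (hc.getVert_inj (ZMod.val_lt s) (ZMod.val_lt t) h)

lemma cidx_cvtx (hc : c.IsCycle) [NeZero c.length] (t : ZMod c.length) :
    cidx c (cvtx c t) = t := by
  have h : ∃ s : ZMod c.length, cvtx c s = cvtx c t := ⟨t, rfl⟩
  rw [cidx, dif_pos h]
  exact cvtx_injective hc h.choose_spec

lemma cvtx_natCast {i : ℕ} (hi : i < c.length) : cvtx c (i : ZMod c.length) = c.getVert i := by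
  rw [cvtx, ZMod.val_natCast_of_lt hi]

lemma cvtx_natCast_add_one {i : ℕ} (hi : i < c.length) :
    cvtx c ((i : ZMod c.length) + 1) = c.getVert (i + 1) := by
  have h0 : 0 < c.length := by omega
  have : ((i : ZMod c.length) + 1) = ((i + 1 : ℕ) : ZMod c.length) := by push_cast; ring
  rw [this, cvtx]
  have : ((i + 1 : ℕ) : ZMod c.length).val = (i + 1) % c.length := ZMod.val_natCast _ _
  rw [this]
  rcases lt_or_eq_of_le (Nat.succ_le_of_lt hi) with h | h
  · rw [Nat.mod_eq_of_lt h]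
  · have h' : i + 1 = c.length := h
    rw [h', Nat.mod_self, Walk.getVert_zero]
    exact (c.getVert_of_length_le (by omega)).symm

lemma cidx_edge_step (hc : c.IsCycle) [NeZero c.length] {x y : V}
    (hf : s(x, y) ∈ c.edges) :
    cidx c y - cidx c x = 1 ∨ cidx c y - cidx c x = -1 := by
  obtain ⟨i, hi, hie⟩ := c.edge_getVert hf
  rw [← cvtx_natCast hi, ← cvtx_natCast_add_one hi] at hie
  rw [Sym2.eq_iff] at hie
  rcases hie with ⟨hx, hy⟩ | ⟨hx, hy⟩
  · left
    rw [hx, hy, cidx_cvtx hc, cidx_cvtx hc]; ring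
  · right
    rw [hx, hy, cidx_cvtx hc, cidx_cvtx hc]; ring

/-- Distance bound along a walk. -/
lemma dist_getVert_le (hG : G.Connected) {u w : V} (p : G.Walk u w) {i j : ℕ}
    (hij : i ≤ j) (hj : j ≤ p.length) :
    G.dist (p.getVert i) (p.getVert j) ≤ j - i := by
  induction j with
  | zero =>
    have : i = 0 := by omega
    subst this; simp
  | succ j ih =>
    rcases Nat.lt_or_ge i (j + 1) with h | h
    · have h1 : G.dist (p.getVert i) (p.getVert j) ≤ j - i := ih (by omega) (by omega)
      have h2 : G.dist (p.getVert j) (p.getVert (j+1)) = 1 :=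
        dist_eq_one_iff_adj.mpr (p.adj_getVert_succ (by omega))
      calc G.dist (p.getVert i) (p.getVert (j+1))
          ≤ G.dist (p.getVert i) (p.getVert j) + G.dist (p.getVert j) (p.getVert (j+1)) :=
            hG.dist_triangle
        _ ≤ (j - i) + 1 := by omega
        _ = j + 1 - i := by omega
    · have : i = j + 1 := by omega
      subst this; simp

/-- Wrap-around distance bound on a closed walk. -/
lemma dist_getVert_wrap (hG : G.Connected) {i j : ℕ}
    (hij : i ≤ j) (hj : j ≤ c.length) :
    G.dist (c.getVert i) (c.getVert j) ≤ i + (c.length - j) := by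
  have h1 : G.dist (c.getVert 0) (c.getVert i) ≤ i := by
    simpa using dist_getVert_le hG c (Nat.zero_le i) (le_trans hij hj)
  have h2 : G.dist (c.getVert j) (c.getVert c.length) ≤ c.length - j := by
    simpa using dist_getVert_le hG c hj le_rfl
  rw [Walk.getVert_zero] at h1
  rw [Walk.getVert_length] at h2
  calc G.dist (c.getVert i) (c.getVert j)
      ≤ G.dist (c.getVert i) v + G.dist v (c.getVert j) := hG.dist_triangle
    _ ≤ i + (c.length - j) := by
        rw [dist_comm] at h1
        rw [dist_comm] at h2
        omega

end SimpleGraph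

lemma cactus_no_chordal_path [Finite V] (hcac : _root_.IsCactus G) {v a b : V} {c : G.Walk v v}
    (hc : c.IsCycle) (ha : a ∈ c.support) (hb : b ∈ c.support) (hab : a ≠ b)
    {P : G.Walk a b} (hP : P.IsPath)
    (hint : ∀ p ∈ P.support, p ∈ c.support → p = a ∨ p = b)
    (hne : ∃ f ∈ P.edges, f ∉ c.edges) : False := by
  classical
  set c' : G.Walk a a := c.rotate a ha with hc'def
  have hc' : c'.IsCycle := hc.rotate ha
  have hb' : b ∈ c'.support := (Walk.mem_support_rotate_iff c a ha).mpr hb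
  set A : G.Walk a b := c'.takeUntil b hb' with hAdef
  set D : G.Walk b a := c'.dropUntil b hb' with hDdef
  have hAD : A.append D = c' := c'.take_spec hb'
  have hsupp : c'.support.tail = A.support.tail ++ D.support.tail := by
    rw [← hAD, Walk.tail_support_append]
  have hnd : (A.support.tail ++ D.support.tail).Nodup := by rw [← hsupp]; exact hc'.2
  rw [List.nodup_append] at hnd
  obtain ⟨hndA, hndD, hdisj⟩ := hnd
  have haD : a ∈ D.support.tail := by
    have h1 : a ∈ D.support := D.end_mem_support
    rw [D.support_eq_cons] at h1
    rcases List.mem_cons.mp h1 with h2 | h2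
    · exact absurd h2 hab
    · exact h2
  have haA : a ∉ A.support.tail := fun h => hdisj a h a haD rfl
  have hApath : A.IsPath := by
    rw [Walk.isPath_def, A.support_eq_cons]
    exact List.nodup_cons.mpr ⟨haA, hndA⟩
  have hbA : b ∈ A.support.tail := by
    have h1 : b ∈ A.support := A.end_mem_support
    rw [A.support_eq_cons] at h1
    rcases List.mem_cons.mp h1 with h2 | h2
    · exact absurd h2 hab.symm
    · exact h2
  have hAedges : ∀ f ∈ A.edges, f ∈ c.edges := by
    intro f hf
    have h1 : f ∈ c'.edges := c'.edges_takeUntil_subset hb' hf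
    exact (Walk.rotate_edges c a ha).mem_iff.mp h1
  -- no edge of `P` is an edge of `c`
  have hkey : ∀ f ∈ P.edges, f ∉ c.edges := by
    intro f hfP hfc
    obtain ⟨i, hi, hie⟩ := P.edge_getVert hfP
    induction f using Sym2.ind with | _ p q =>
    have hp1 : p ∈ P.support := P.fst_mem_support_of_mem_edges hfP
    have hq1 : q ∈ P.support := P.snd_mem_support_of_mem_edges hfP
    have hp2 : p ∈ c.support := c.fst_mem_support_of_mem_edges hfc
    have hq2 : q ∈ c.support := c.snd_mem_support_of_mem_edges hfc
    have hpq : p ≠ q := (P.adj_of_mem_edges hfP).ne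
    have h2 : s(a, b) = s(P.getVert i, P.getVert (i+1)) := by
      rcases hint p hp1 hp2 with rfl | rfl <;> rcases hint q hq1 hq2 with rfl | rfl
      · exact absurd rfl hpq
      · exact hie
      · rw [Sym2.eq_swap]; exact hie
      · exact absurd rfl hpq
    have hgv0 : P.getVert 0 = a := P.getVert_zero
    have hgvl : P.getVert P.length = b := P.getVert_length
    have hlen1 : P.length = 1 := by
      rw [Sym2.eq_iff] at h2
      rcases h2 with ⟨h3, h4⟩ | ⟨h3, h4⟩
      · have e1 : (0 : ℕ) = i := hP.getVert_inj (by omega) hi.le (by rw [hgv0]; exact h3)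
        have e2 : i + 1 = P.length := hP.getVert_inj (by omega) le_rfl (by rw [hgvl]; exact h4.symm)
        omega
      · have e2 : i = P.length := hP.getVert_inj hi.le le_rfl (by rw [hgvl]; exact h4.symm)
        omega
    obtain ⟨f₀, hf₀P, hf₀c⟩ := hne
    obtain ⟨i₀, hi₀, h₀e⟩ := P.edge_getVert hf₀P
    have hi₀0 : i₀ = 0 := by omega
    have hfeq : f₀ = s(a, b) := by
      rw [h₀e, hi₀0, hgv0, show (0:ℕ)+1 = P.length by omega, hgvl]
    apply hf₀c
    rw [hfeq, h2]
    rw [← hie]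
    exact hfc
  set c₂ : G.Walk a a := A.append P.reverse with hc₂def
  have hAne : A.length ≠ 0 := fun h0 => hab (Walk.eq_of_length_eq_zero h0)
  have hc₂ : c₂.IsCycle := by
    refine ⟨⟨⟨?_⟩, ?_⟩, ?_⟩
    · rw [Walk.edges_append]
      rw [List.nodup_append]
      refine ⟨hApath.isTrail.edges_nodup, ?_, ?_⟩
      · rw [Walk.edges_reverse]
        exact List.nodup_reverse.mpr hP.isTrail.edges_nodup
      · intro f hfA f' hfPr hff; subst hff
        rw [Walk.edges_reverse, List.mem_reverse] at hfPr
        exact hkey f hfPr (hAedges f hfA)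
    · intro h0
      have : c₂.length = 0 := by rw [h0]; rfl
      rw [Walk.length_append] at this
      omega
    · rw [Walk.tail_support_append, List.nodup_append]
      refine ⟨hndA, ?_, ?_⟩
      · exact (Walk.isPath_def _ |>.mp hP.reverse).tail
      · intro q hqA q' hqPr hqq; subst hqq
        have hq1 : q ∈ c.support := by
          rw [← Walk.mem_support_rotate_iff c a ha]
          exact c'.support_takeUntil_subset hb' (List.mem_of_mem_tail hqA)
        have hq2 : q ∈ P.support := by
          have := List.mem_of_mem_tail hqPr
          rw [Walk.support_reverse, List.mem_reverse] at this
          exact this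
        rcases hint q hq2 hq1 with rfl | rfl
        · exact haA hqA
        · have hnodup : P.reverse.support.Nodup := Walk.isPath_def _ |>.mp hP.reverse
          rw [P.reverse.support_eq_cons] at hnodup
          exact (List.nodup_cons.mp hnodup).1 hqPr
  obtain ⟨hconn, hcact⟩ := hcac
  have hne2 : {e | e ∈ c.edges} ≠ {e | e ∈ c₂.edges} := by
    obtain ⟨f₀, hf₀P, hf₀c⟩ := hne
    intro hEq
    have hmem : f₀ ∈ {e | e ∈ c₂.edges} := by
      simp only [Set.mem_setOf_eq]
      rw [hc₂def, Walk.edges_append, List.mem_append]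
      right; rw [Walk.edges_reverse, List.mem_reverse]; exact hf₀P
    rw [← hEq] at hmem
    exact hf₀c hmem
  have hle := hcact v a c c₂ hc hc₂ hne2
  have h2le : 2 ≤ Set.ncard {x | x ∈ c.support ∧ x ∈ c₂.support} := by
    have hsub : {a, b} ⊆ {x | x ∈ c.support ∧ x ∈ c₂.support} := by
      intro x hx
      rcases hx with rfl | hx
      · exact ⟨ha, c₂.start_mem_support⟩
      · rcases hx with rfl
        refine ⟨hb, ?_⟩
        rw [hc₂def, Walk.mem_support_append_iff]
        exact Or.inl A.end_mem_support
    calc 2 = Set.ncard ({a, b} : Set V) := (Set.ncard_pair hab).symm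
      _ ≤ _ := Set.ncard_le_ncard hsub (Set.toFinite _)
  omega
lemma cactus_cycle_walk_idx [Finite V] (hcac : _root_.IsCactus G) {v : V} {c : G.Walk v v}
    (hc : c.IsCycle) [NeZero c.length] :
    ∀ (n : ℕ) {a b : V} (W : G.Walk a b), W.length ≤ n → a ∈ c.support → b ∈ c.support →
    ∃ s : ℤ, s.natAbs ≤ W.length ∧ (s : ZMod c.length) = cidx c b - cidx c a := by
  intro n
  induction n with
  | zero =>
    intro a b W hW ha hb
    have hab : a = b := Walk.eq_of_length_eq_zero (Nat.le_zero.mp hW)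
    subst hab
    exact ⟨0, by simp⟩
  | succ n ih =>
    intro a b W hW ha hb
    by_cases hsplit : ∃ m ∈ W.support, m ∈ c.support ∧ m ≠ a ∧ m ≠ b
    · obtain ⟨m, hmW, hmc, hma, hmb⟩ := hsplit
      have hlen : (W.takeUntil m hmW).length + (W.dropUntil m hmW).length = W.length := by
        rw [← Walk.length_append, W.take_spec hmW]
      have h1 : (W.takeUntil m hmW).length ≠ 0 :=
        fun h => hma (Walk.eq_of_length_eq_zero h).symm
      have h2 : (W.dropUntil m hmW).length ≠ 0 :=
        fun h => hmb (Walk.eq_of_length_eq_zero h)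
      obtain ⟨s1, hs1, hs1'⟩ := ih (W.takeUntil m hmW) (by omega) ha hmc
      obtain ⟨s2, hs2, hs2'⟩ := ih (W.dropUntil m hmW) (by omega) hmc hb
      refine ⟨s1 + s2, ?_, ?_⟩
      · calc (s1+s2).natAbs ≤ s1.natAbs + s2.natAbs := Int.natAbs_add_le _ _
          _ ≤ W.length := by omega
      · push_cast
        rw [hs1', hs2']; ring
    · push_neg at hsplit
      by_cases hab : a = b
      · subst hab; exact ⟨0, by simp⟩
      · set P : G.Walk a b := (W.toPath : G.Walk a b) with hPdef
        have hPpath : P.IsPath := W.toPath.2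
        have hint : ∀ p ∈ P.support, p ∈ c.support → p = a ∨ p = b := by
          intro p hp hpc
          rcases eq_or_ne p a with rfl | hpa
          · exact Or.inl rfl
          · exact Or.inr (hsplit p (W.support_toPath_subset hp) hpc hpa)
        have hW1 : 1 ≤ W.length := by
          rcases Nat.eq_zero_or_pos W.length with h | h
          · exact absurd (Walk.eq_of_length_eq_zero h) hab
          · omega
        rcases Nat.lt_or_ge P.length 2 with hPl | hPl
        · have hP1 : P.length = 1 := by
            rcases Nat.eq_zero_or_pos P.length with h | h
            · exact absurd (Walk.eq_of_length_eq_zero h) hab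
            · omega
          have hPnil : ¬ P.Nil := by rw [Walk.nil_iff_length_eq]; omega
          have hgv1 : P.getVert 1 = b := by
            rw [show (1:ℕ) = P.length from hP1.symm, P.getVert_length]
          have hfe : s(a, b) ∈ P.edges := by
            have := P.firstEdge_mem hPnil; rwa [hgv1] at this
          by_cases hfc : s(a,b) ∈ c.edges
          · rcases cidx_edge_step hc hfc with h | h
            · exact ⟨1, by simpa using hW1, by rw [Int.cast_one]; exact h.symm⟩
            · exact ⟨-1, by simpa using hW1,
                by rw [Int.cast_neg, Int.cast_one]; exact h.symm⟩
          · exact (cactus_no_chordal_path hcac hc ha hb hab hPpath hint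
              ⟨s(a,b), hfe, hfc⟩).elim
        · have hPnil : ¬ P.Nil := by rw [Walk.nil_iff_length_eq]; omega
          have hg1 : P.getVert 1 ∈ P.support := P.getVert_mem_support' 1
          have hg1a : P.getVert 1 ≠ a := by
            intro h
            have : (1:ℕ) = 0 := hPpath.getVert_inj (by omega) (by omega)
              (by rw [h, P.getVert_zero])
            omega
          have hg1b : P.getVert 1 ≠ b := by
            intro h
            have : (1:ℕ) = P.length := hPpath.getVert_inj (by omega) le_rfl
              (by rw [P.getVert_length]; exact h)
            omega
          have hg1c : P.getVert 1 ∉ c.support := by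
            intro h
            rcases hint _ hg1 h with h' | h'
            exacts [hg1a h', hg1b h']
          have hfc : s(a, P.getVert 1) ∉ c.edges :=
            fun h => hg1c (c.snd_mem_support_of_mem_edges h)
          exact (cactus_no_chordal_path hcac hc ha hb hab hPpath hint
            ⟨_, P.firstEdge_mem hPnil, hfc⟩).elim
theorem stmt_12 [Fintype V] (G : SimpleGraph V) (hG : IsCactus G)
    (v : V) (c : G.Walk v v) (hc : c.IsCycle) (hodd : Odd c.length)
    (e : Sym2 V) (he : e ∈ c.edges) :
    PIedge G e ≤ Fintype.card V - 3 := by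
  classical
  have hconn : G.Connected := hG.1
  have hL3 : 3 ≤ c.length := hc.three_le_length
  obtain ⟨k, hk⟩ := hodd
  have hk1 : 1 ≤ k := by omega
  haveI : NeZero c.length := ⟨by omega⟩
  obtain ⟨i, hi, hie⟩ := c.edge_getVert he
  set x := c.getVert i with hxdef
  set y := c.getVert (i+1) with hydef
  set ti : ZMod c.length := (i : ZMod c.length) with htidef
  have hx : cvtx c ti = x := cvtx_natCast hi
  have hy : cvtx c (ti + 1) = y := cvtx_natCast_add_one hi
  set tw : ZMod c.length := ti + ((k+1 : ℕ) : ZMod c.length) with htw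
  set w := cvtx c tw with hwdef
  have hne0 : ∀ m : ℕ, 0 < m → m < c.length → ((m:ℕ) : ZMod c.length) ≠ 0 := by
    intro m h1 h2 h0
    rw [ZMod.natCast_eq_zero_iff] at h0
    have := Nat.le_of_dvd h1 h0; omega
  -- distinctness
  have hwx : w ≠ x := by
    intro h
    have h1 : tw = ti := cvtx_injective hc (by rw [← hwdef, h, ← hx])
    rw [htw] at h1
    have h2 : ((k+1 : ℕ) : ZMod c.length) = 0 := by
      have := add_eq_left.mp h1; exact this
    exact hne0 (k+1) (by omega) (by omega) h2
  have hwy : w ≠ y := by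
    intro h
    have h1 : tw = ti + 1 := cvtx_injective hc (by rw [← hwdef, h, ← hy])
    rw [htw] at h1
    have h2 : ((k : ℕ) : ZMod c.length) = 0 := by
      have h3 := add_left_cancel h1
      have h4 : ((k+1 : ℕ) : ZMod c.length) = ((1:ℕ) : ZMod c.length) := by
        rw [h3]; simp
      have h5 : ((k+1 : ℕ) : ZMod c.length) - ((1:ℕ) : ZMod c.length)
          = ((k:ℕ) : ZMod c.length) := by push_cast; ring
      rw [← h5, h4, sub_self]
    exact hne0 k (by omega) (by omega) h2
  have hxy : x ≠ y := by
    intro h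
    have h1 : ti = ti + 1 := cvtx_injective hc (by rw [hx, h, ← hy])
    have h2 : ((1:ℕ) : ZMod c.length) = 0 := by
      have := add_eq_left.mp h1.symm; simpa using this
    exact hne0 1 (by omega) (by omega) h2
  -- w as an explicit getVert
  have htwcast : tw = (((i + k + 1) : ℕ) : ZMod c.length) := by
    rw [htw, htidef]; push_cast; ring
  have hwgv : w = c.getVert ((i + k + 1) % c.length) := by
    rw [hwdef, cvtx, htwcast, ZMod.val_natCast]
  -- upper bounds on distance
  have hdwx : G.dist w x ≤ k := by
    rcases Nat.lt_or_ge (i + k + 1) c.length with h1 | h1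
    · have hmod : (i + k + 1) % c.length = i + k + 1 := Nat.mod_eq_of_lt h1
      have hw1 : w = c.getVert (i + k + 1) := by rw [hwgv, hmod]
      have hb := dist_getVert_wrap (c := c) hconn
        (show i ≤ i + k + 1 by omega) (show i + k + 1 ≤ c.length by omega)
      rw [← hxdef, ← hw1] at hb
      rw [SimpleGraph.dist_comm]
      omega
    · have h2 : (i + k + 1) % c.length = i + k + 1 - c.length := by
        have : i + k + 1 - c.length < c.length := by omega
        conv_lhs => rw [show i + k + 1 = (i + k + 1 - c.length) + c.length by omega]
        rw [Nat.add_mod_right, Nat.mod_eq_of_lt this]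
      have hw1 : w = c.getVert (i + k + 1 - c.length) := by rw [hwgv, h2]
      have hb := dist_getVert_le hconn c
        (show i + k + 1 - c.length ≤ i by omega) hi.le
      rw [← hxdef, ← hw1] at hb
      omega
  have hdwy : G.dist w y ≤ k := by
    rcases Nat.lt_or_ge (i + k + 1) c.length with h1 | h1
    · have hmod : (i + k + 1) % c.length = i + k + 1 := Nat.mod_eq_of_lt h1
      have hw1 : w = c.getVert (i + k + 1) := by rw [hwgv, hmod]
      have hb := dist_getVert_le hconn c
        (show i + 1 ≤ i + k + 1 by omega) (show i + k + 1 ≤ c.length by omega)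
      rw [← hydef, ← hw1] at hb
      rw [SimpleGraph.dist_comm] at hb
      omega
    · have h2 : (i + k + 1) % c.length = i + k + 1 - c.length := by
        have : i + k + 1 - c.length < c.length := by omega
        conv_lhs => rw [show i + k + 1 = (i + k + 1 - c.length) + c.length by omega]
        rw [Nat.add_mod_right, Nat.mod_eq_of_lt this]
      have hw1 : w = c.getVert (i + k + 1 - c.length) := by rw [hwgv, h2]
      have hb := dist_getVert_wrap (c := c) hconn
        (show i + k + 1 - c.length ≤ i + 1 by omega) (show i + 1 ≤ c.length by omega)
      rw [← hydef, ← hw1] at hb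
      omega
  -- membership in the cycle support
  have hws : w ∈ c.support := by rw [hwdef, cvtx]; exact c.getVert_mem_support' _
  have hxs : x ∈ c.support := by rw [hxdef]; exact c.getVert_mem_support' _
  have hys : y ∈ c.support := by rw [hydef]; exact c.getVert_mem_support' _
  have hcx : cidx c x = ti := by rw [← hx, cidx_cvtx hc]
  have hcy : cidx c y = ti + 1 := by rw [← hy, cidx_cvtx hc]
  have hcw : cidx c w = tw := by rw [hwdef, cidx_cvtx hc]
  -- lower bounds on distance
  have hdwx' : k ≤ G.dist w x := by
    by_contra hlt
    push_neg at hlt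
    obtain ⟨W, hWlen⟩ := (hconn.preconnected w x).exists_walk_length_eq_dist
    obtain ⟨s, hsabs, hscast⟩ := cactus_cycle_walk_idx hG hc W.length W le_rfl hws hxs
    have hdiff : cidx c x - cidx c w = -(((k+1:ℕ) : ℤ) : ZMod c.length) := by
      rw [hcx, hcw, htw]; push_cast; ring
    have hzero : ((s + (k+1: ℕ) : ℤ) : ZMod c.length) = 0 := by
      push_cast
      rw [hscast, hdiff]; push_cast; ring
    rw [ZMod.intCast_zmod_eq_zero_iff_dvd] at hzero
    have hpos : (0:ℤ) < s + (k+1:ℕ) := by omega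
    have := Int.le_of_dvd hpos hzero
    omega
  have hdwy' : k ≤ G.dist w y := by
    by_contra hlt
    push_neg at hlt
    obtain ⟨W, hWlen⟩ := (hconn.preconnected w y).exists_walk_length_eq_dist
    obtain ⟨s, hsabs, hscast⟩ := cactus_cycle_walk_idx hG hc W.length W le_rfl hws hys
    have hdiff : cidx c y - cidx c w = -(((k:ℕ) : ℤ) : ZMod c.length) := by
      rw [hcy, hcw, htw]; push_cast; ring
    have hzero : ((s + (k: ℕ) : ℤ) : ZMod c.length) = 0 := by
      push_cast
      rw [hscast, hdiff]; push_cast; ring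
    rw [ZMod.intCast_zmod_eq_zero_iff_dvd] at hzero
    have hpos : (0:ℤ) < s + (k:ℕ) := by omega
    have := Int.le_of_dvd hpos hzero
    omega
  have hdeq : G.dist w x = G.dist w y := by omega
  -- counting
  have hex : e = s(x, y) := hie
  rw [hex]
  have hPI : PIedge G s(x, y) = nclose G x y + nclose G y x := by
    simp [PIedge]
  rw [hPI]
  set A := {w' : V | w' ≠ x ∧ w' ≠ y ∧ G.dist w' x < G.dist w' y} with hA
  set B := {w' : V | w' ≠ y ∧ w' ≠ x ∧ G.dist w' y < G.dist w' x} with hB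
  have hnA : nclose G x y = A.ncard := Nat.card_coe_set_eq _
  have hnB : nclose G y x = B.ncard := Nat.card_coe_set_eq _
  have hsub : A ∪ B ⊆ Set.univ \ {x, y, w} := by
    intro z hz
    refine ⟨Set.mem_univ z, ?_⟩
    intro hzm
    simp only [Set.mem_insert_iff, Set.mem_singleton_iff] at hzm
    rcases hz with hz | hz
    · rcases hzm with rfl | rfl | rfl
      · exact hz.1 rfl
      · exact hz.2.1 rfl
      · have := hz.2.2; omega
    · rcases hzm with rfl | rfl | rfl
      · exact hz.2.1 rfl
      · exact hz.1 rfl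
      · have := hz.2.2; omega
  have hdisjAB : Disjoint A B := by
    rw [Set.disjoint_left]
    intro z hzA hzB
    exact lt_asymm hzA.2.2 hzB.2.2
  have hcard3 : ({x, y, w} : Set V).ncard = 3 := by
    rw [Set.ncard_insert_of_notMem (by
        simp only [Set.mem_insert_iff, Set.mem_singleton_iff]
        push_neg
        exact ⟨hxy, fun h => hwx h.symm⟩) (Set.toFinite _),
      Set.ncard_pair (fun h => hwy h.symm)]
  have hunion : A.ncard + B.ncard = (A ∪ B).ncard :=
    (Set.ncard_union_eq hdisjAB (Set.toFinite _) (Set.toFinite _)).symm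
  have hle2 : (A ∪ B).ncard ≤ (Set.univ \ {x, y, w}).ncard :=
    Set.ncard_le_ncard hsub (Set.toFinite _)
  have hdiffcard : (Set.univ \ {x, y, w} : Set V).ncard
      = Fintype.card V - 3 := by
    rw [Set.ncard_diff (Set.subset_univ _) (Set.toFinite _), hcard3, Set.ncard_univ,
      Nat.card_eq_fintype_card]
  omega
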